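/- Suppose u_h, v_h, ω_h : [0,T] → V_h^k are differentiable in t and satisfy, for every cell I'_j and all test functions φ, ϕ, ψ ∈ V_h^k: ((v_h)_t, φ)_{I'_j} = (u_h, φ)_{I'_j} + ⟨{ω_h}, φ⟩_{I'_j} − (ω_h, φ_x)_{I'_j}; (v_h, ϕ)_{I'_j} = ⟨{u_h}, ϕ⟩_{I'_j} − (u_h, ϕ_x)_{I'_j}; and (ω_h, ψ)_{I'_j} = ⟨f̂(u_h), ψ⟩_{I'_j} − (f(u_h), ψ_x)_{I'_j}, where f(u) = u³/6, F(u) = u⁴/24, and at each interface the nonlinear flux is f̂(u_h) = ⟦F(u_h)⟧/⟦u_h⟧ if ⟦u_h⟧ ≠ 0 and f̂(u_h) = f({u_h}) if ⟦u_h⟧ = 0, with periodic boundary conditions. Then the discrete energy E_0(u_h) = ∫_{x_L}^{x_R} u_h(x,t)² dx is conserved: d/dt ∫_{x_L}^{x_R} u_h² dx = 0 for all t. -/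

import Mathlib

open MeasureTheory Polynomial
open scoped Classical

noncomputable section

/- Mesh with `N + 1` cells: cell `j` is `I'_j = [grid j.castSucc, grid j.succ]`.
A DG function in `V_h^k` is represented by the family of its polynomial restrictions
to the cells; interfaces are treated periodically (indices modulo the number of cells). -/

/-- Left endpoint of cell `j`. -/
def lep {N : ℕ} (grid : Fin (N + 2) → ℝ) (j : Fin (N + 1)) : ℝ := grid j.castSucc

/-- Right endpoint of cell `j`. -/
def rep {N : ℕ} (grid : Fin (N + 2) → ℝ) (j : Fin (N + 1)) : ℝ := grid j.succ

/-- `∫_{I'_j} f dx`. -/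
def cellInt {N : ℕ} (grid : Fin (N + 2) → ℝ) (j : Fin (N + 1)) (f : ℝ → ℝ) : ℝ :=
  ∫ y in lep grid j..rep grid j, f y

/-- Trace `w⁻` at the interface `x_{j+1/2}`, from the left cell `I'_j`. -/
def trM {N : ℕ} (grid : Fin (N + 2) → ℝ) (f : Fin (N + 1) → Polynomial ℝ)
    (j : Fin (N + 1)) : ℝ :=
  (f j).eval (rep grid j)

/-- Trace `w⁺` at the interface `x_{j+1/2}`, from the right cell `I'_{j+1}`
(cyclically, realizing the periodic boundary conditions). -/
def trP {N : ℕ} (grid : Fin (N + 2) → ℝ) (f : Fin (N + 1) → Polynomial ℝ)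
    (j : Fin (N + 1)) : ℝ :=
  (f (j + 1)).eval (lep grid (j + 1))

/-- Average `{w} = (w⁺ + w⁻)/2` at the interface `x_{j+1/2}`. -/
def avg {N : ℕ} (grid : Fin (N + 2) → ℝ) (f : Fin (N + 1) → Polynomial ℝ)
    (j : Fin (N + 1)) : ℝ :=
  (trP grid f j + trM grid f j) / 2

/-- Boundary bracket `⟨ĥ, φ⟩_{I'_j} = ĥ_{j+1/2} φ⁻_{j+1/2} - ĥ_{j-1/2} φ⁺_{j-1/2}`, where the
interface values `ĥ` are indexed by the right interface of each cell (periodically). -/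
def brk {N : ℕ} (grid : Fin (N + 2) → ℝ) (hat : Fin (N + 1) → ℝ) (φ : Polynomial ℝ)
    (j : Fin (N + 1)) : ℝ :=
  hat j * φ.eval (rep grid j) - hat (j - 1) * φ.eval (lep grid j)

/-- The conservative nonlinear flux `f̂(u_h)` for `f(u) = u³/6`, `F(u) = u⁴/24`:
`f̂ = ⟦F(u_h)⟧/⟦u_h⟧` if `⟦u_h⟧ ≠ 0` and `f̂ = f({u_h})` otherwise. -/
def fhat {N : ℕ} (grid : Fin (N + 2) → ℝ) (u : Fin (N + 1) → Polynomial ℝ)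
    (j : Fin (N + 1)) : ℝ :=
  if trP grid u j = trM grid u j then ((trP grid u j + trM grid u j) / 2) ^ 3 / 6
  else ((trP grid u j) ^ 4 / 24 - (trM grid u j) ^ 4 / 24) / (trP grid u j - trM grid u j)

namespace SPaux


def nds (k : ℕ) : Fin (k + 1) → ℝ := fun i => (i : ℕ)
lemma nds_inj (k : ℕ) : Set.InjOn (nds k) (Finset.univ : Finset (Fin (k + 1))) := by
  intro a _ b _ h
  exact Fin.ext (Nat.cast_injective h)
lemma eq_interp {k : ℕ} {p : Polynomial ℝ} (hp : p.natDegree ≤ k) :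
    p = Lagrange.interpolate Finset.univ (nds k) (fun i => p.eval (nds k i)) := by
  apply Lagrange.eq_interpolate (nds_inj k)
  rw [Finset.card_univ, Fintype.card_fin]
  exact lt_of_le_of_lt (Polynomial.degree_le_of_natDegree_le hp)
    (by exact_mod_cast Nat.lt_succ_self k)
lemma natDeg_interp {k : ℕ} (r : Fin (k + 1) → ℝ) :
    (Lagrange.interpolate Finset.univ (nds k) r).natDegree ≤ k := by
  by_cases h0 : Lagrange.interpolate Finset.univ (nds k) r = 0
  · simp [h0]
  · have := Lagrange.degree_interpolate_lt r (nds_inj k)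
    rw [Finset.card_univ, Fintype.card_fin] at this
    exact Nat.lt_succ_iff.mp ((Polynomial.natDegree_lt_iff_degree_lt h0).mpr this)
lemma eval_interp {k : ℕ} (r : Fin (k + 1) → ℝ) (y : ℝ) :
    (Lagrange.interpolate Finset.univ (nds k) r).eval y
      = ∑ i : Fin (k + 1), r i * (Lagrange.basis Finset.univ (nds k) i).eval y := by
  simp [Lagrange.interpolate_apply, Polynomial.eval_finset_sum]

/-- Representation of integrals against degree-`≤ k` polynomials via nodal values. -/
lemma rep_int {k : ℕ} {p : Polynomial ℝ} (hp : p.natDegree ≤ k) {r : ℝ → ℝ}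
    (hr : Continuous r) (a b : ℝ) :
    ∫ y in a..b, p.eval y * r y
      = ∑ i : Fin (k + 1), p.eval (nds k i)
          * ∫ y in a..b, (Lagrange.basis Finset.univ (nds k) i).eval y * r y := by
  have h1 : ∀ y, p.eval y
      = ∑ i : Fin (k + 1), p.eval (nds k i) * (Lagrange.basis Finset.univ (nds k) i).eval y :=
    fun y => by conv_lhs => rw [eq_interp hp, eval_interp]
  calc ∫ y in a..b, p.eval y * r y
      = ∫ y in a..b, ∑ i : Fin (k + 1),
          p.eval (nds k i) * ((Lagrange.basis Finset.univ (nds k) i).eval y * r y) := by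
        refine intervalIntegral.integral_congr fun y _ => ?_
        rw [h1 y, Finset.sum_mul]
        simp [mul_assoc]
    _ = ∑ i : Fin (k + 1), ∫ y in a..b,
          p.eval (nds k i) * ((Lagrange.basis Finset.univ (nds k) i).eval y * r y) := by
        refine intervalIntegral.integral_finset_sum fun i _ => ?_
        exact (continuous_const.mul ((Polynomial.continuous _).mul hr)).intervalIntegrable _ _
    _ = ∑ i : Fin (k + 1), p.eval (nds k i)
          * ∫ y in a..b, (Lagrange.basis Finset.univ (nds k) i).eval y * r y := by
        simp [intervalIntegral.integral_const_mul]

/-- The time derivative of a degree-bounded polynomial family is its own interpolation,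
hence degree-bounded. -/
lemma deriv_interp {k : ℕ} {P : ℝ → Polynomial ℝ} {Q : Polynomial ℝ} {t : ℝ}
    (hdeg : ∀ τ, (P τ).natDegree ≤ k)
    (hP : ∀ y, HasDerivAt (fun τ => (P τ).eval y) (Q.eval y) t) :
    Q = Lagrange.interpolate Finset.univ (nds k) (fun i => Q.eval (nds k i)) := by
  apply Polynomial.funext; intro y
  have hfun : (fun τ => (P τ).eval y) = fun τ => ∑ i : Fin (k + 1),
      (P τ).eval (nds k i) * (Lagrange.basis Finset.univ (nds k) i).eval y := by
    funext τ; conv_lhs => rw [eq_interp (hdeg τ), eval_interp]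
  have h2 : HasDerivAt (fun τ => (P τ).eval y)
      (∑ i : Fin (k + 1), Q.eval (nds k i) * (Lagrange.basis Finset.univ (nds k) i).eval y) t := by
    rw [hfun]
    exact HasDerivAt.fun_sum fun i _ => (hP (nds k i)).mul_const _
  rw [(hP y).unique h2, eval_interp]

lemma deriv_natDeg {k : ℕ} {P : ℝ → Polynomial ℝ} {Q : Polynomial ℝ} {t : ℝ}
    (hdeg : ∀ τ, (P τ).natDegree ≤ k)
    (hP : ∀ y, HasDerivAt (fun τ => (P τ).eval y) (Q.eval y) t) : Q.natDegree ≤ k := by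
  rw [deriv_interp hdeg hP]; exact natDeg_interp _

/-- Differentiation under the integral sign, polynomial family times fixed test. -/
lemma hasDerivAt_int {k : ℕ} {P : ℝ → Polynomial ℝ} {Q : Polynomial ℝ} {t : ℝ}
    (hdeg : ∀ τ, (P τ).natDegree ≤ k)
    (hP : ∀ y, HasDerivAt (fun τ => (P τ).eval y) (Q.eval y) t)
    (a b : ℝ) (ψ : Polynomial ℝ) :
    HasDerivAt (fun τ => ∫ y in a..b, (P τ).eval y * ψ.eval y)
      (∫ y in a..b, Q.eval y * ψ.eval y) t := by
  have hQ : Q.natDegree ≤ k := deriv_natDeg hdeg hP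
  have hfun : (fun τ => ∫ y in a..b, (P τ).eval y * ψ.eval y)
      = fun τ => ∑ i : Fin (k + 1), (P τ).eval (nds k i)
          * ∫ y in a..b, (Lagrange.basis Finset.univ (nds k) i).eval y * ψ.eval y :=
    funext fun τ => rep_int (hdeg τ) (Polynomial.continuous ψ) a b
  rw [hfun, rep_int hQ (Polynomial.continuous ψ) a b]
  exact HasDerivAt.fun_sum fun i _ => (hP (nds k i)).mul_const _

lemma hasDerivAt_int_left {k : ℕ} {P : ℝ → Polynomial ℝ} {Q : Polynomial ℝ} {t : ℝ}
    (hdeg : ∀ τ, (P τ).natDegree ≤ k)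
    (hP : ∀ y, HasDerivAt (fun τ => (P τ).eval y) (Q.eval y) t)
    (a b : ℝ) (ψ : Polynomial ℝ) :
    HasDerivAt (fun τ => ∫ y in a..b, ψ.eval y * (P τ).eval y)
      (∫ y in a..b, ψ.eval y * Q.eval y) t := by
  have e1 : (fun τ => ∫ y in a..b, ψ.eval y * (P τ).eval y)
      = fun τ => ∫ y in a..b, (P τ).eval y * ψ.eval y :=
    funext fun τ => intervalIntegral.integral_congr fun y _ => mul_comm _ _
  have e2 : (∫ y in a..b, ψ.eval y * Q.eval y) = ∫ y in a..b, Q.eval y * ψ.eval y :=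
    intervalIntegral.integral_congr fun y _ => mul_comm _ _
  rw [e1, e2]; exact hasDerivAt_int hdeg hP a b ψ

/-- Differentiation of the squared integral. -/
lemma hasDerivAt_int_sq {k : ℕ} {P : ℝ → Polynomial ℝ} {Q : Polynomial ℝ} {t : ℝ}
    (hdeg : ∀ τ, (P τ).natDegree ≤ k)
    (hP : ∀ y, HasDerivAt (fun τ => (P τ).eval y) (Q.eval y) t)
    (a b : ℝ) :
    HasDerivAt (fun τ => ∫ y in a..b, ((P τ).eval y) ^ 2)
      (2 * ∫ y in a..b, Q.eval y * (P t).eval y) t := by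
  have hQ : Q.natDegree ≤ k := deriv_natDeg hdeg hP
  have hfun : (fun τ => ∫ y in a..b, ((P τ).eval y) ^ 2)
      = fun τ => ∑ i : Fin (k + 1), (P τ).eval (nds k i)
          * ∫ y in a..b, (Lagrange.basis Finset.univ (nds k) i).eval y * (P τ).eval y := by
    funext τ
    have : (∫ y in a..b, ((P τ).eval y) ^ 2) = ∫ y in a..b, (P τ).eval y * (P τ).eval y :=
      intervalIntegral.integral_congr fun y _ => sq ((P τ).eval y)
    rw [this, rep_int (hdeg τ) (Polynomial.continuous (P τ)) a b]
  have hD : HasDerivAt (fun τ => ∑ i : Fin (k + 1), (P τ).eval (nds k i)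
        * ∫ y in a..b, (Lagrange.basis Finset.univ (nds k) i).eval y * (P τ).eval y)
      (∑ i : Fin (k + 1),
        ((Q.eval (nds k i) * ∫ y in a..b,
            (Lagrange.basis Finset.univ (nds k) i).eval y * (P t).eval y)
          + (P t).eval (nds k i) * ∫ y in a..b,
            (Lagrange.basis Finset.univ (nds k) i).eval y * Q.eval y)) t := by
    refine HasDerivAt.fun_sum fun i _ => ?_
    exact (hP (nds k i)).mul (hasDerivAt_int_left hdeg hP a b _)
  rw [hfun]
  convert hD using 1
  rw [Finset.sum_add_distrib, ← rep_int hQ (Polynomial.continuous (P t)) a b,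
    ← rep_int (hdeg t) (Polynomial.continuous Q) a b]
  have : (∫ y in a..b, (P t).eval y * Q.eval y) = ∫ y in a..b, Q.eval y * (P t).eval y :=
    intervalIntegral.integral_congr fun y _ => mul_comm _ _
  rw [this]; ring


variable {N : ℕ} (grid : Fin (N + 2) → ℝ)

lemma cellInt_congr {j : Fin (N + 1)} {f g : ℝ → ℝ} (h : ∀ y, f y = g y) :
    cellInt grid j f = cellInt grid j g := by
  unfold cellInt; exact intervalIntegral.integral_congr fun y _ => h y

lemma cellInt_deriv (j : Fin (N + 1)) (r : Polynomial ℝ) :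
    cellInt grid j (fun y => (derivative r).eval y)
      = r.eval (rep grid j) - r.eval (lep grid j) := by
  unfold cellInt
  refine intervalIntegral.integral_eq_sub_of_hasDerivAt (fun y _ => r.hasDerivAt y) ?_
  exact (Polynomial.continuous _).intervalIntegrable _ _

lemma sum_shift (g : Fin (N + 1) → ℝ) : ∑ j, g (j + 1) = ∑ j, g j :=
  Fintype.sum_equiv (Equiv.addRight 1) _ _ fun _ => rfl

lemma sum_shift' (g : Fin (N + 1) → ℝ) : ∑ j, g (j - 1) = ∑ j, g j :=
  Fintype.sum_equiv (Equiv.subRight 1) _ _ fun _ => rfl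

lemma trP_sub_one (f : Fin (N + 1) → Polynomial ℝ) (j : Fin (N + 1)) :
    trP grid f (j - 1) = (f j).eval (lep grid j) := by
  unfold trP; rw [sub_add_cancel]

/-- Telescoping of the boundary brackets. -/
lemma sum_brk (hat : Fin (N + 1) → ℝ) (f : Fin (N + 1) → Polynomial ℝ) :
    ∑ j, brk grid hat (f j) j
      = ∑ j, (hat j * trM grid f j - hat j * trP grid f j) := by
  unfold brk
  have h1 : ∀ j, (f j).eval (lep grid j) = trP grid f (j - 1) :=
    fun j => (trP_sub_one grid f j).symm
  calc ∑ j, (hat j * (f j).eval (rep grid j) - hat (j - 1) * (f j).eval (lep grid j))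
      = ∑ j, (hat j * trM grid f j) - ∑ j, (hat (j - 1) * trP grid f (j - 1)) := by
        rw [← Finset.sum_sub_distrib]
        exact Finset.sum_congr rfl fun j _ => by rw [h1 j]; rfl
    _ = ∑ j, (hat j * trM grid f j) - ∑ j, (hat j * trP grid f j) := by
        rw [sum_shift' (fun j => hat j * trP grid f j)]
    _ = ∑ j, (hat j * trM grid f j - hat j * trP grid f j) := by
        rw [← Finset.sum_sub_distrib]

/-- Telescoping of cell integrals of exact derivatives. -/
lemma sum_cellInt_deriv (r : Fin (N + 1) → Polynomial ℝ) :
    ∑ j, cellInt grid j (fun y => (derivative (r j)).eval y)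
      = ∑ j, ((r j).eval (rep grid j) - (r (j + 1)).eval (lep grid (j + 1))) := by
  calc ∑ j, cellInt grid j (fun y => (derivative (r j)).eval y)
      = ∑ j, ((r j).eval (rep grid j) - (r j).eval (lep grid j)) :=
        Finset.sum_congr rfl fun j _ => cellInt_deriv grid j (r j)
    _ = ∑ j, (r j).eval (rep grid j) - ∑ j, (r j).eval (lep grid j) :=
        Finset.sum_sub_distrib _ _
    _ = ∑ j, (r j).eval (rep grid j) - ∑ j, (r (j + 1)).eval (lep grid (j + 1)) := by
        rw [← sum_shift (fun j => (r j).eval (lep grid j))]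
    _ = _ := (Finset.sum_sub_distrib _ _).symm

/-- Cell integration by parts for a pair of polynomials. -/
lemma cellInt_pair (j : Fin (N + 1)) (p q : Polynomial ℝ) :
    cellInt grid j (fun y => p.eval y * (derivative q).eval y)
      + cellInt grid j (fun y => q.eval y * (derivative p).eval y)
      = cellInt grid j (fun y => (derivative (p * q)).eval y) := by
  unfold cellInt
  rw [← intervalIntegral.integral_add
    (((Polynomial.continuous _).fun_mul (Polynomial.continuous _)).intervalIntegrable _ _)
    (((Polynomial.continuous _).fun_mul (Polynomial.continuous _)).intervalIntegrable _ _)]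
  refine intervalIntegral.integral_congr fun y _ => ?_
  simp [Polynomial.derivative_mul]; ring

lemma cellInt_cubic (j : Fin (N + 1)) (p : Polynomial ℝ) :
    cellInt grid j (fun y => (p.eval y) ^ 3 / 6 * (derivative p).eval y)
      = (1 / 24) * cellInt grid j (fun y => (derivative (p ^ 4)).eval y) := by
  unfold cellInt
  rw [← intervalIntegral.integral_const_mul]
  refine intervalIntegral.integral_congr fun y _ => ?_
  simp [Polynomial.derivative_pow]; ring

/-- The conservativity of the nonlinear flux. -/
lemma fhat_mul (u : Fin (N + 1) → Polynomial ℝ) (j : Fin (N + 1)) :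
    fhat grid u j * (trM grid u j - trP grid u j)
      = (trM grid u j) ^ 4 / 24 - (trP grid u j) ^ 4 / 24 := by
  unfold fhat
  by_cases h : trP grid u j = trM grid u j
  · rw [if_pos h, h]; ring
  · rw [if_neg h]
    have h2 : trP grid u j - trM grid u j ≠ 0 := sub_ne_zero.mpr h
    field_simp
    ring


end SPaux

/-- **`E₀`-conservation of the semi-discrete DG scheme for the short pulse equation
`u_{xt} = u + (1/6)(u³)_{xx}`** (written as `v_t = u + ω_x`, `v = u_x`, `ω = (u³/6)_x`),
with periodic boundary conditions and numerical fluxes `ω̂ = {ω}`, `û = {u}`, and the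
conservative flux `f̂(u)`. The discrete energy `E₀(u_h) = ∫_I u_h² dx` satisfies
`d/dt E₀(u_h) = 0` for all `t`. -/
theorem shortPulse_DG_E0_conserved
    (N k : ℕ) (grid : Fin (N + 2) → ℝ) (hgrid : StrictMono grid)
    (u v w u' v' w' : ℝ → Fin (N + 1) → Polynomial ℝ)
    (hdeg : ∀ t j, (u t j).natDegree ≤ k ∧ (v t j).natDegree ≤ k ∧ (w t j).natDegree ≤ k)
    (hu' : ∀ (t : ℝ) (j : Fin (N + 1)) (y : ℝ),
      HasDerivAt (fun τ => (u τ j).eval y) ((u' t j).eval y) t)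
    (hv' : ∀ (t : ℝ) (j : Fin (N + 1)) (y : ℝ),
      HasDerivAt (fun τ => (v τ j).eval y) ((v' t j).eval y) t)
    (hw' : ∀ (t : ℝ) (j : Fin (N + 1)) (y : ℝ),
      HasDerivAt (fun τ => (w τ j).eval y) ((w' t j).eval y) t)
    (scheme1 : ∀ (t : ℝ) (j : Fin (N + 1)) (φ : Polynomial ℝ), φ.natDegree ≤ k →
      cellInt grid j (fun y => (v' t j).eval y * φ.eval y)
        = cellInt grid j (fun y => (u t j).eval y * φ.eval y)
          + brk grid (avg grid (w t)) φ j
          - cellInt grid j (fun y => (w t j).eval y * φ.derivative.eval y))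
    (scheme2 : ∀ (t : ℝ) (j : Fin (N + 1)) (φ : Polynomial ℝ), φ.natDegree ≤ k →
      cellInt grid j (fun y => (v t j).eval y * φ.eval y)
        = brk grid (avg grid (u t)) φ j
          - cellInt grid j (fun y => (u t j).eval y * φ.derivative.eval y))
    (scheme3 : ∀ (t : ℝ) (j : Fin (N + 1)) (φ : Polynomial ℝ), φ.natDegree ≤ k →
      cellInt grid j (fun y => (w t j).eval y * φ.eval y)
        = brk grid (fhat grid (u t)) φ j
          - cellInt grid j (fun y => ((u t j).eval y) ^ 3 / 6 * φ.derivative.eval y))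
    (t : ℝ) :
    HasDerivAt (fun τ => ∑ j, cellInt grid j (fun y => ((u τ j).eval y) ^ 2)) 0 t := by
  classical
  -- degree bound on the time derivative of u
  have hU'deg : ∀ j, (u' t j).natDegree ≤ k := fun j =>
    SPaux.deriv_natDeg (fun τ => (hdeg τ j).1) (hu' t j)
  -- time derivative of interface averages and brackets of u
  have hAvg : ∀ j : Fin (N + 1),
      HasDerivAt (fun τ => avg grid (u τ) j) (avg grid (u' t) j) t := by
    intro j
    simp only [avg, trP, trM]
    exact ((hu' t (j + 1) _).add (hu' t j _)).div_const 2
  have hBrk : ∀ (j : Fin (N + 1)) (φ : Polynomial ℝ),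
      HasDerivAt (fun τ => brk grid (avg grid (u τ)) φ j)
        (brk grid (avg grid (u' t)) φ j) t := by
    intro j φ
    simp only [brk]
    exact ((hAvg j).mul_const _).sub ((hAvg (j - 1)).mul_const _)
  -- time-differentiated second scheme equation
  have hD2 : ∀ (j : Fin (N + 1)) (φ : Polynomial ℝ), φ.natDegree ≤ k →
      cellInt grid j (fun y => (v' t j).eval y * φ.eval y)
        = brk grid (avg grid (u' t)) φ j
          - cellInt grid j (fun y => (u' t j).eval y * φ.derivative.eval y) := by
    intro j φ hφ
    have hL : HasDerivAt (fun τ => cellInt grid j (fun y => (v τ j).eval y * φ.eval y))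
        (cellInt grid j (fun y => (v' t j).eval y * φ.eval y)) t := by
      simp only [cellInt]
      exact SPaux.hasDerivAt_int (fun τ => (hdeg τ j).2.1) (hv' t j) _ _ φ
    have hR : HasDerivAt (fun τ => brk grid (avg grid (u τ)) φ j
          - cellInt grid j (fun y => (u τ j).eval y * φ.derivative.eval y))
        (brk grid (avg grid (u' t)) φ j
          - cellInt grid j (fun y => (u' t j).eval y * φ.derivative.eval y)) t := by
      refine (hBrk j φ).sub ?_
      simp only [cellInt]
      exact SPaux.hasDerivAt_int (fun τ => (hdeg τ j).1) (hu' t j) _ _ φ.derivative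
    have hEq : (fun τ => cellInt grid j (fun y => (v τ j).eval y * φ.eval y))
        = fun τ => brk grid (avg grid (u τ)) φ j
            - cellInt grid j (fun y => (u τ j).eval y * φ.derivative.eval y) :=
      funext fun τ => scheme2 τ j φ hφ
    rw [hEq] at hL
    exact hL.unique hR
  -- per-cell scheme equations with the relevant test functions
  have E1 := fun j => scheme1 t j (u' t j) (hU'deg j)
  have E2 := fun j => hD2 j (u' t j) (hU'deg j)
  have E3 := fun j => scheme1 t j (w t j) (hdeg t j).2.2
  have E4 := fun j => hD2 j (w t j) (hdeg t j).2.2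
  have E5 := fun j => scheme3 t j (u t j) (hdeg t j).1
  -- Step A : ∑ (u, w) = 0
  have stepA : ∑ j, cellInt grid j (fun y => (u t j).eval y * (w t j).eval y) = 0 := by
    have h7 : ∀ j, cellInt grid j (fun y => (u t j).eval y * (w t j).eval y)
        = cellInt grid j (fun y => (w t j).eval y * (u t j).eval y) :=
      fun j => SPaux.cellInt_congr grid fun y => mul_comm _ _
    have hbf : ∑ j, brk grid (fhat grid (u t)) (u t j) j
        = ∑ j, ((trM grid (u t) j) ^ 4 / 24 - (trP grid (u t) j) ^ 4 / 24) := by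
      rw [SPaux.sum_brk]
      refine Finset.sum_congr rfl fun j _ => ?_
      rw [← mul_sub, SPaux.fhat_mul]
    have hc8 : ∑ j, cellInt grid j
          (fun y => ((u t j).eval y) ^ 3 / 6 * (derivative (u t j)).eval y)
        = ∑ j, ((trM grid (u t) j) ^ 4 / 24 - (trP grid (u t) j) ^ 4 / 24) := by
      calc ∑ j, cellInt grid j (fun y => ((u t j).eval y) ^ 3 / 6 * (derivative (u t j)).eval y)
          = ∑ j, (1 / 24) * cellInt grid j (fun y => (derivative ((u t j) ^ 4)).eval y) :=
            Finset.sum_congr rfl fun j _ => SPaux.cellInt_cubic grid j (u t j)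
        _ = (1 / 24) * ∑ j, cellInt grid j (fun y => (derivative ((u t j) ^ 4)).eval y) :=
            (Finset.mul_sum _ _ _).symm
        _ = (1 / 24) * ∑ j, (((u t j) ^ 4).eval (rep grid j)
              - ((u t (j + 1)) ^ 4).eval (lep grid (j + 1))) := by
            rw [SPaux.sum_cellInt_deriv grid (fun j => (u t j) ^ 4)]
        _ = ∑ j, ((trM grid (u t) j) ^ 4 / 24 - (trP grid (u t) j) ^ 4 / 24) := by
            rw [Finset.mul_sum]
            refine Finset.sum_congr rfl fun j _ => ?_
            simp only [trM, trP, Polynomial.eval_pow]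
            ring
    calc ∑ j, cellInt grid j (fun y => (u t j).eval y * (w t j).eval y)
        = ∑ j, cellInt grid j (fun y => (w t j).eval y * (u t j).eval y) :=
          Finset.sum_congr rfl fun j _ => h7 j
      _ = ∑ j, (brk grid (fhat grid (u t)) (u t j) j
            - cellInt grid j (fun y => ((u t j).eval y) ^ 3 / 6
                * (derivative (u t j)).eval y)) :=
          Finset.sum_congr rfl fun j _ => E5 j
      _ = 0 := by
          rw [Finset.sum_sub_distrib, hbf, hc8, sub_self]
  -- Step B : ∑ (u, u_t) = ∑ (u, w)
  have masterj : ∀ j : Fin (N + 1),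
      2 * cellInt grid j (fun y => (u t j).eval y * (u' t j).eval y)
        = (2 * brk grid (avg grid (u' t)) (u' t j) j
            - 2 * cellInt grid j (fun y => (u' t j).eval y * (derivative (u' t j)).eval y))
          - (2 * brk grid (avg grid (w t)) (u' t j) j
              + 2 * brk grid (avg grid (u' t)) (w t j) j
              - 2 * (cellInt grid j (fun y => (w t j).eval y * (derivative (u' t j)).eval y)
                  + cellInt grid j (fun y => (u' t j).eval y * (derivative (w t j)).eval y)))
          + (2 * brk grid (avg grid (w t)) (w t j) j
              - 2 * cellInt grid j (fun y => (w t j).eval y * (derivative (w t j)).eval y))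
          + 2 * cellInt grid j (fun y => (u t j).eval y * (w t j).eval y) := by
    intro j
    have e1 := E1 j; have e2 := E2 j; have e3 := E3 j; have e4 := E4 j
    linarith
  have ZA : ∑ j, (2 * brk grid (avg grid (u' t)) (u' t j) j
      - 2 * cellInt grid j (fun y => (u' t j).eval y * (derivative (u' t j)).eval y)) = 0 := by
    have h1 : ∑ j, 2 * cellInt grid j
          (fun y => (u' t j).eval y * (derivative (u' t j)).eval y)
        = ∑ j, (((u' t j) * (u' t j)).eval (rep grid j)
            - ((u' t (j + 1)) * (u' t (j + 1))).eval (lep grid (j + 1))) := by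
      refine Eq.trans (Finset.sum_congr rfl fun j _ => ?_)
        (SPaux.sum_cellInt_deriv grid (fun j => (u' t j) * (u' t j)))
      have := SPaux.cellInt_pair grid j (u' t j) (u' t j)
      linarith
    have h2 : ∑ j, 2 * brk grid (avg grid (u' t)) (u' t j) j
        = ∑ j, 2 * (avg grid (u' t) j * trM grid (u' t) j
            - avg grid (u' t) j * trP grid (u' t) j) := by
      rw [← Finset.mul_sum, SPaux.sum_brk, Finset.mul_sum]
    rw [Finset.sum_sub_distrib, h1, h2, ← Finset.sum_sub_distrib]
    refine Finset.sum_eq_zero fun j _ => ?_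
    simp only [avg, trM, trP, Polynomial.eval_mul]
    ring
  have ZC : ∑ j, (2 * brk grid (avg grid (w t)) (w t j) j
      - 2 * cellInt grid j (fun y => (w t j).eval y * (derivative (w t j)).eval y)) = 0 := by
    have h1 : ∑ j, 2 * cellInt grid j
          (fun y => (w t j).eval y * (derivative (w t j)).eval y)
        = ∑ j, (((w t j) * (w t j)).eval (rep grid j)
            - ((w t (j + 1)) * (w t (j + 1))).eval (lep grid (j + 1))) := by
      refine Eq.trans (Finset.sum_congr rfl fun j _ => ?_)
        (SPaux.sum_cellInt_deriv grid (fun j => (w t j) * (w t j)))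
      have := SPaux.cellInt_pair grid j (w t j) (w t j)
      linarith
    have h2 : ∑ j, 2 * brk grid (avg grid (w t)) (w t j) j
        = ∑ j, 2 * (avg grid (w t) j * trM grid (w t) j
            - avg grid (w t) j * trP grid (w t) j) := by
      rw [← Finset.mul_sum, SPaux.sum_brk, Finset.mul_sum]
    rw [Finset.sum_sub_distrib, h1, h2, ← Finset.sum_sub_distrib]
    refine Finset.sum_eq_zero fun j _ => ?_
    simp only [avg, trM, trP, Polynomial.eval_mul]
    ring
  have ZB : ∑ j, (2 * brk grid (avg grid (w t)) (u' t j) j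
      + 2 * brk grid (avg grid (u' t)) (w t j) j
      - 2 * (cellInt grid j (fun y => (w t j).eval y * (derivative (u' t j)).eval y)
          + cellInt grid j (fun y => (u' t j).eval y * (derivative (w t j)).eval y))) = 0 := by
    have h1 : ∑ j, 2 * (cellInt grid j (fun y => (w t j).eval y * (derivative (u' t j)).eval y)
          + cellInt grid j (fun y => (u' t j).eval y * (derivative (w t j)).eval y))
        = ∑ j, 2 * (((w t j) * (u' t j)).eval (rep grid j)
            - ((w t (j + 1)) * (u' t (j + 1))).eval (lep grid (j + 1))) := by
      rw [← Finset.mul_sum, ← Finset.mul_sum]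
      congr 1
      refine Eq.trans (Finset.sum_congr rfl fun j _ => ?_)
        (SPaux.sum_cellInt_deriv grid (fun j => (w t j) * (u' t j)))
      exact SPaux.cellInt_pair grid j (w t j) (u' t j)
    have h2 : ∑ j, 2 * brk grid (avg grid (w t)) (u' t j) j
        = ∑ j, 2 * (avg grid (w t) j * trM grid (u' t) j
            - avg grid (w t) j * trP grid (u' t) j) := by
      rw [← Finset.mul_sum, SPaux.sum_brk, Finset.mul_sum]
    have h3 : ∑ j, 2 * brk grid (avg grid (u' t)) (w t j) j
        = ∑ j, 2 * (avg grid (u' t) j * trM grid (w t) j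
            - avg grid (u' t) j * trP grid (w t) j) := by
      rw [← Finset.mul_sum, SPaux.sum_brk, Finset.mul_sum]
    calc ∑ j, (2 * brk grid (avg grid (w t)) (u' t j) j
        + 2 * brk grid (avg grid (u' t)) (w t j) j
        - 2 * (cellInt grid j (fun y => (w t j).eval y * (derivative (u' t j)).eval y)
            + cellInt grid j (fun y => (u' t j).eval y * (derivative (w t j)).eval y)))
        = (∑ j, 2 * brk grid (avg grid (w t)) (u' t j) j)
          + (∑ j, 2 * brk grid (avg grid (u' t)) (w t j) j)
          - ∑ j, 2 * (cellInt grid j (fun y => (w t j).eval y * (derivative (u' t j)).eval y)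
              + cellInt grid j (fun y => (u' t j).eval y * (derivative (w t j)).eval y)) := by
          rw [Finset.sum_sub_distrib, Finset.sum_add_distrib]
      _ = 0 := by
          rw [h1, h2, h3, ← Finset.sum_add_distrib, ← Finset.sum_sub_distrib]
          refine Finset.sum_eq_zero fun j _ => ?_
          simp only [avg, trM, trP, Polynomial.eval_mul]
          ring
  have stepB : ∑ j, 2 * cellInt grid j (fun y => (u t j).eval y * (u' t j).eval y)
      = ∑ j, 2 * cellInt grid j (fun y => (u t j).eval y * (w t j).eval y) := by
    calc ∑ j, 2 * cellInt grid j (fun y => (u t j).eval y * (u' t j).eval y)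
        = ∑ j, ((2 * brk grid (avg grid (u' t)) (u' t j) j
            - 2 * cellInt grid j (fun y => (u' t j).eval y * (derivative (u' t j)).eval y))
          - (2 * brk grid (avg grid (w t)) (u' t j) j
              + 2 * brk grid (avg grid (u' t)) (w t j) j
              - 2 * (cellInt grid j (fun y => (w t j).eval y * (derivative (u' t j)).eval y)
                  + cellInt grid j (fun y => (u' t j).eval y * (derivative (w t j)).eval y)))
          + (2 * brk grid (avg grid (w t)) (w t j) j
              - 2 * cellInt grid j (fun y => (w t j).eval y * (derivative (w t j)).eval y))
          + 2 * cellInt grid j (fun y => (u t j).eval y * (w t j).eval y)) :=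
          Finset.sum_congr rfl fun j _ => masterj j
      _ = ∑ j, 2 * cellInt grid j (fun y => (u t j).eval y * (w t j).eval y) := by
          simp only [Finset.sum_add_distrib, Finset.sum_sub_distrib] at ZA ZB ZC ⊢
          linarith
  -- conclusion
  have hD : HasDerivAt (fun τ => ∑ j, cellInt grid j (fun y => ((u τ j).eval y) ^ 2))
      (∑ j, 2 * cellInt grid j (fun y => (u' t j).eval y * (u t j).eval y)) t := by
    refine HasDerivAt.fun_sum fun j _ => ?_
    simp only [cellInt]
    exact SPaux.hasDerivAt_int_sq (fun τ => (hdeg τ j).1) (hu' t j) _ _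
  have hzero : (∑ j, 2 * cellInt grid j (fun y => (u' t j).eval y * (u t j).eval y)) = 0 := by
    have hcomm : ∀ j : Fin (N + 1),
        cellInt grid j (fun y => (u' t j).eval y * (u t j).eval y)
          = cellInt grid j (fun y => (u t j).eval y * (u' t j).eval y) :=
      fun j => SPaux.cellInt_congr grid fun y => mul_comm _ _
    calc ∑ j, 2 * cellInt grid j (fun y => (u' t j).eval y * (u t j).eval y)
        = ∑ j, 2 * cellInt grid j (fun y => (u t j).eval y * (u' t j).eval y) :=
          Finset.sum_congr rfl fun j _ => by rw [hcomm j]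
      _ = ∑ j, 2 * cellInt grid j (fun y => (u t j).eval y * (w t j).eval y) := stepB
      _ = 2 * ∑ j, cellInt grid j (fun y => (u t j).eval y * (w t j).eval y) :=
          (Finset.mul_sum _ _ _).symm
      _ = 0 := by rw [stepA, mul_zero]
  exact hzero ▸ hD

end
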